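/- Series solution of the modified Mathieu equation in powers of the semi-minor axis: let R, h be real numbers, set m' = R − 2h², and let (k_s)_{s≥0} satisfy k₁ = −m'·k₀/2 and k_{s+1} = ((4s² − m')·k_s − 4h²·k_{s−1}) / ((2s+1)(2s+2)) for all s ≥ 1. Then the power series g(u) := ∑_{s=0}^{∞} (−1)^s·k_s·u^{2s} converges for every u with |u| < 1, and the function g so defined satisfies (1 + u²)·g''(u) + u·g'(u) + (4h²u² − R + 2h²)·g(u) = 0 for all u ∈ (−1, 1). -/

import Mathlib

open Real

/-- The alternating power series `∑ (−1)^s k_s u^{2s}` with coefficient sequence `k`. -/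
noncomputable def modifiedMathieuSeries (k : ℕ → ℝ) (u : ℝ) : ℝ :=
  ∑' s : ℕ, (-1 : ℝ) ^ s * k s * u ^ (2 * s)

section aux

variable {R h : ℝ} {k : ℕ → ℝ}

/-- Growth bound on the coefficients: for any `r > 1`, `|k s| ≤ C r^s`. -/
lemma mm_kbound
    (hrec : ∀ s : ℕ, 1 ≤ s →
      k (s + 1) = ((4 * (s : ℝ) ^ 2 - (R - 2 * h ^ 2)) * k s - 4 * h ^ 2 * k (s - 1)) /
        ((2 * (s : ℝ) + 1) * (2 * (s : ℝ) + 2)))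
    {r : ℝ} (hr : 1 < r) :
    ∃ C : ℝ, 0 ≤ C ∧ ∀ s : ℕ, |k s| ≤ C * r ^ s := by
  set A : ℝ := |R - 2 * h ^ 2| + 4 * h ^ 2 with hA
  have hA0 : 0 ≤ A := by positivity
  set N : ℕ := ⌈A / (4 * (r - 1))⌉₊ + 1 with hN
  have hNA : A / (4 * (r - 1)) ≤ (N : ℕ) := by
    have := Nat.le_ceil (A / (4 * (r - 1)))
    push_cast [hN]
    linarith
  have hkey : ∀ s : ℕ, N ≤ s → 4 * (s : ℝ) ^ 2 + A ≤ r * ((2 * s + 1) * (2 * s + 2)) := by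
    intro s hs
    have hs1 : (1 : ℝ) ≤ s := by
      have : 1 ≤ s := le_trans (by omega) hs
      exact_mod_cast this
    have hsN : (N : ℝ) ≤ s := by exact_mod_cast hs
    have h1 : A ≤ 4 * (r - 1) * s := by
      have h4 : (0:ℝ) < 4 * (r - 1) := by linarith
      have := (div_le_iff₀ h4).mp (le_trans hNA hsN)
      linarith [this]
    have h2 : 4 * (r - 1) * (s:ℝ) ≤ 4 * (r - 1) * (s:ℝ)^2 := by nlinarith
    nlinarith [sq_nonneg ((s:ℝ))]
  set C : ℝ := (Finset.range (N + 2)).sup' (by simp) (fun s => |k s|) with hC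
  have hCmem : ∀ s : ℕ, s < N + 2 → |k s| ≤ C := by
    intro s hs
    exact Finset.le_sup' (fun s => |k s|) (Finset.mem_range.mpr hs)
  have hC0 : 0 ≤ C := le_trans (abs_nonneg (k 0)) (hCmem 0 (by omega))
  have hr0 : (0:ℝ) < r := by linarith
  have hrpow : ∀ s : ℕ, (1:ℝ) ≤ r ^ s := fun s => one_le_pow₀ (le_of_lt hr)
  have hCle : ∀ s : ℕ, s < N + 2 → |k s| ≤ C * r ^ s := by
    intro s hs
    calc |k s| ≤ C := hCmem s hs
    _ = C * 1 := by ring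
    _ ≤ C * r ^ s := by gcongr; exact hrpow s
  refine ⟨C, hC0, ?_⟩
  have main : ∀ s : ℕ, |k s| ≤ C * r ^ s ∧ |k (s + 1)| ≤ C * r ^ (s + 1) := by
    intro s
    induction s with
    | zero => exact ⟨hCle 0 (by omega), hCle 1 (by omega)⟩
    | succ n ih =>
      refine ⟨ih.2, ?_⟩
      by_cases hn : n + 2 < N + 2
      · exact hCle (n + 2) hn
      · -- use the recurrence at s = n + 1 ≥ N
        have hNn : N ≤ n + 1 := by omega
        have hrec' := hrec (n + 1) (by omega)
        have hD : (0:ℝ) < (2 * ((n:ℝ) + 1) + 1) * (2 * ((n:ℝ) + 1) + 2) := by positivity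
        have hkeys := hkey (n + 1) hNn
        push_cast at hrec' hkeys
        rw [hrec']
        rw [abs_div]
        have hDabs : |(2 * ((n:ℝ) + 1) + 1) * (2 * ((n:ℝ) + 1) + 2)| =
            (2 * ((n:ℝ) + 1) + 1) * (2 * ((n:ℝ) + 1) + 2) := abs_of_pos hD
        rw [hDabs, div_le_iff₀ hD]
        have tri : |(4 * ((n:ℝ) + 1) ^ 2 - (R - 2 * h ^ 2)) * k (n + 1) - 4 * h ^ 2 * k n| ≤
            (4 * ((n:ℝ) + 1) ^ 2 + |R - 2 * h ^ 2|) * |k (n + 1)| + 4 * h ^ 2 * |k n| := by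
          calc |(4 * ((n:ℝ) + 1) ^ 2 - (R - 2 * h ^ 2)) * k (n + 1) - 4 * h ^ 2 * k n|
              ≤ |(4 * ((n:ℝ) + 1) ^ 2 - (R - 2 * h ^ 2)) * k (n + 1)| + |4 * h ^ 2 * k n| :=
                abs_sub _ _
            _ = |4 * ((n:ℝ) + 1) ^ 2 - (R - 2 * h ^ 2)| * |k (n + 1)| + 4 * h ^ 2 * |k n| := by
                rw [abs_mul, abs_mul, abs_of_nonneg (by positivity : (0:ℝ) ≤ 4 * h ^ 2)]
            _ ≤ (4 * ((n:ℝ) + 1) ^ 2 + |R - 2 * h ^ 2|) * |k (n + 1)| + 4 * h ^ 2 * |k n| := by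
                gcongr
                calc |4 * ((n:ℝ) + 1) ^ 2 - (R - 2 * h ^ 2)| ≤
                    |4 * ((n:ℝ) + 1) ^ 2| + |R - 2 * h ^ 2| := abs_sub _ _
                  _ = 4 * ((n:ℝ) + 1) ^ 2 + |R - 2 * h ^ 2| := by
                      congr 1; exact abs_of_nonneg (by positivity)
        have h1 : |k (n+1)| ≤ C * r ^ (n+1) := ih.2
        have h2 : |k n| ≤ C * r ^ (n+1) := by
          calc |k n| ≤ C * r ^ n := ih.1
            _ ≤ C * r ^ (n+1) := by
                have : r ^ n ≤ r ^ (n+1) := pow_le_pow_right₀ (le_of_lt hr) (by omega)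
                nlinarith
        calc |(4 * ((n:ℝ) + 1) ^ 2 - (R - 2 * h ^ 2)) * k (n + 1) - 4 * h ^ 2 * k n|
            ≤ (4 * ((n:ℝ) + 1) ^ 2 + |R - 2 * h ^ 2|) * |k (n + 1)| + 4 * h ^ 2 * |k n| := tri
          _ ≤ (4 * ((n:ℝ) + 1) ^ 2 + |R - 2 * h ^ 2|) * (C * r ^ (n+1)) +
              4 * h ^ 2 * (C * r ^ (n+1)) := by
              gcongr
          _ = (4 * ((n:ℝ) + 1) ^ 2 + A) * (C * r ^ (n+1)) := by rw [hA]; ring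
          _ ≤ (r * ((2 * ((n:ℝ)+1) + 1) * (2 * ((n:ℝ)+1) + 2))) * (C * r ^ (n+1)) := by
              have hCr : (0:ℝ) ≤ C * r ^ (n+1) := by positivity
              nlinarith [hkeys]
          _ = C * r ^ (n + 1 + 1) * ((2 * ((n:ℝ)+1) + 1) * (2 * ((n:ℝ)+1) + 2)) := by ring
  exact fun s => (main s).1


/-- Master summability: `∑ (s²+1) |k s| x^s` converges for `0 < x < 1`. -/
lemma mm_master
    (hrec : ∀ s : ℕ, 1 ≤ s →
      k (s + 1) = ((4 * (s : ℝ) ^ 2 - (R - 2 * h ^ 2)) * k s - 4 * h ^ 2 * k (s - 1)) /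
        ((2 * (s : ℝ) + 1) * (2 * (s : ℝ) + 2)))
    {x : ℝ} (hx0 : 0 < x) (hx1 : x < 1) :
    Summable (fun s : ℕ => ((s : ℝ) ^ 2 + 1) * |k s| * x ^ s) := by
  set r : ℝ := (1 + x⁻¹) / 2 with hrdef
  have hxinv : 1 < x⁻¹ := (one_lt_inv₀ hx0).mpr hx1
  have hr1 : 1 < r := by rw [hrdef]; linarith
  have hrx : r * x = (x + 1) / 2 := by
    rw [hrdef]; field_simp
  have hrx0 : 0 < r * x := by rw [hrx]; linarith
  have hrx1 : r * x < 1 := by rw [hrx]; linarith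
  obtain ⟨C, hC0, hC⟩ := mm_kbound (R := R) (h := h) hrec hr1
  have hgeom : Summable (fun s : ℕ => C * (((s : ℝ) ^ 2 + 1) * (r * x) ^ s)) := by
    apply Summable.mul_left
    have h1 : Summable (fun s : ℕ => ((s : ℝ)) ^ 2 * (r * x) ^ s) :=
      summable_pow_mul_geometric_of_norm_lt_one 2 (by rw [Real.norm_eq_abs, abs_of_pos hrx0]; exact hrx1)
    have h2 : Summable (fun s : ℕ => (r * x) ^ s) :=
      summable_geometric_of_lt_one (le_of_lt hrx0) hrx1
    simpa [add_mul, one_mul] using h1.add h2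
  apply Summable.of_nonneg_of_le (fun s => by positivity) _ hgeom
  intro s
  calc ((s : ℝ) ^ 2 + 1) * |k s| * x ^ s ≤ ((s : ℝ) ^ 2 + 1) * (C * r ^ s) * x ^ s := by
        gcongr
        exact hC s
    _ = C * (((s : ℝ) ^ 2 + 1) * (r * x) ^ s) := by rw [mul_pow]; ring

end aux

namespace MathieuAux

/-- Term of the series. -/
def mmF (k : ℕ → ℝ) (s : ℕ) (y : ℝ) : ℝ := (-1) ^ s * k s * y ^ (2 * s)

/-- Term of the derived series. -/
def mmF1 (k : ℕ → ℝ) (s : ℕ) (y : ℝ) : ℝ :=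
  ((-1 : ℝ) ^ s * k s * ((2 * s : ℕ) : ℝ)) * y ^ (2 * s - 1)

/-- Term of the twice derived series. -/
def mmF2 (k : ℕ → ℝ) (s : ℕ) (y : ℝ) : ℝ :=
  ((-1 : ℝ) ^ s * k s * ((2 * s : ℕ) : ℝ) * ((2 * s - 1 : ℕ) : ℝ)) * y ^ (2 * s - 1 - 1)

lemma hasDerivAt_mmF (k : ℕ → ℝ) (s : ℕ) (y : ℝ) :
    HasDerivAt (mmF k s) (mmF1 k s y) y := by
  have hfun : mmF k s = fun y : ℝ => (-1 : ℝ) ^ s * k s * y ^ (2 * s) := rfl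
  rw [hfun]
  have := (hasDerivAt_pow (2 * s) y).const_mul ((-1 : ℝ) ^ s * k s)
  simpa [mmF1, mul_assoc] using this

lemma hasDerivAt_mmF1 (k : ℕ → ℝ) (s : ℕ) (y : ℝ) :
    HasDerivAt (mmF1 k s) (mmF2 k s y) y := by
  have hfun : mmF1 k s =
      fun y : ℝ => ((-1 : ℝ) ^ s * k s * ((2 * s : ℕ) : ℝ)) * y ^ (2 * s - 1) := rfl
  rw [hfun]
  have := (hasDerivAt_pow (2 * s - 1) y).const_mul
    ((-1 : ℝ) ^ s * k s * ((2 * s : ℕ) : ℝ))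
  simpa [mmF2, mul_assoc] using this

lemma tpow1 {t : ℝ} (ht0 : 0 < t) (ht1 : t ≤ 1) (s : ℕ) :
    t ^ (2 * s - 1) ≤ (t ^ 2) ^ s / t := by
  cases s with
  | zero =>
      norm_num
      exact (one_le_inv₀ ht0).mpr ht1
  | succ n =>
      have e : 2 * (n + 1) - 1 = 2 * n + 1 := by omega
      have e2 : (t ^ 2) ^ (n + 1) / t = t ^ (2 * n + 1) := by
        rw [← pow_mul]
        have : 2 * (n + 1) = (2 * n + 1) + 1 := by omega
        rw [this, pow_succ, mul_div_cancel_right₀ _ (ne_of_gt ht0)]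
      rw [e, e2]

lemma tpow2 {t : ℝ} (ht0 : 0 < t) (ht1 : t ≤ 1) (s : ℕ) :
    t ^ (2 * s - 1 - 1) ≤ (t ^ 2) ^ s / t ^ 2 := by
  cases s with
  | zero =>
      norm_num
      exact (one_le_inv₀ (by positivity)).mpr (by nlinarith)
  | succ n =>
      have e : 2 * (n + 1) - 1 - 1 = 2 * n := by omega
      have e2 : (t ^ 2) ^ (n + 1) / t ^ 2 = t ^ (2 * n) := by
        rw [pow_succ, mul_div_cancel_right₀ _ (by positivity : (t:ℝ) ^ 2 ≠ 0), ← pow_mul]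
      rw [e, e2]

lemma mm_bound0 {t : ℝ} (ht0 : 0 < t) (k : ℕ → ℝ) (s : ℕ) {y : ℝ} (hy : |y| ≤ t) :
    ‖mmF k s y‖ ≤ ((s : ℝ) ^ 2 + 1) * |k s| * (t ^ 2) ^ s := by
  have h1 : ‖mmF k s y‖ = |k s| * |y| ^ (2 * s) := by
    simp [mmF, abs_mul, abs_pow]
  rw [h1]
  calc |k s| * |y| ^ (2 * s) ≤ |k s| * t ^ (2 * s) :=
        mul_le_mul_of_nonneg_left (pow_le_pow_left₀ (abs_nonneg y) hy _) (abs_nonneg _)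
    _ = |k s| * (t ^ 2) ^ s := by rw [← pow_mul]
    _ ≤ ((s : ℝ) ^ 2 + 1) * |k s| * (t ^ 2) ^ s := by
        nlinarith [mul_nonneg (sq_nonneg ((s:ℝ)))
          (mul_nonneg (abs_nonneg (k s)) (pow_nonneg (sq_nonneg t) s))]

lemma mm_bound1 {t : ℝ} (ht0 : 0 < t) (ht1 : t ≤ 1) (k : ℕ → ℝ) (s : ℕ) {y : ℝ}
    (hy : |y| ≤ t) :
    ‖mmF1 k s y‖ ≤ (2 / t) * (((s : ℝ) ^ 2 + 1) * |k s| * (t ^ 2) ^ s) := by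
  have h1 : ‖mmF1 k s y‖ = |k s| * ((2 * s : ℕ) : ℝ) * |y| ^ (2 * s - 1) := by
    simp [mmF1, abs_mul, abs_pow]
  rw [h1]
  calc |k s| * ((2 * s : ℕ) : ℝ) * |y| ^ (2 * s - 1)
      ≤ |k s| * ((2 * s : ℕ) : ℝ) * t ^ (2 * s - 1) := by
        apply mul_le_mul_of_nonneg_left (pow_le_pow_left₀ (abs_nonneg y) hy _)
        positivity
    _ ≤ |k s| * ((2 * s : ℕ) : ℝ) * ((t ^ 2) ^ s / t) := by
        apply mul_le_mul_of_nonneg_left (tpow1 ht0 ht1 s)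
        positivity
    _ ≤ (2 / t) * (((s : ℝ) ^ 2 + 1) * |k s| * (t ^ 2) ^ s) := by
        have h2s : ((2 * s : ℕ) : ℝ) = 2 * (s : ℝ) := by push_cast; ring
        have key : |k s| * (2 * (s:ℝ)) * (t ^ 2) ^ s ≤
            2 * (((s : ℝ) ^ 2 + 1) * |k s| * (t ^ 2) ^ s) := by
          nlinarith [sq_nonneg ((s:ℝ) - 1), Nat.cast_nonneg (α := ℝ) s,
            mul_nonneg (abs_nonneg (k s)) (pow_nonneg (sq_nonneg t) s),
            mul_nonneg (mul_nonneg (sq_nonneg ((s:ℝ) - 1)) (abs_nonneg (k s)))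
              (pow_nonneg (sq_nonneg t) s)]
        calc |k s| * ((2 * s : ℕ) : ℝ) * ((t ^ 2) ^ s / t)
            = (|k s| * (2 * (s:ℝ)) * (t ^ 2) ^ s) / t := by rw [h2s]; ring
          _ ≤ (2 * (((s : ℝ) ^ 2 + 1) * |k s| * (t ^ 2) ^ s)) / t :=
              div_le_div_of_nonneg_right key (le_of_lt ht0)
          _ = (2 / t) * (((s : ℝ) ^ 2 + 1) * |k s| * (t ^ 2) ^ s) := by ring

lemma mm_bound2 {t : ℝ} (ht0 : 0 < t) (ht1 : t ≤ 1) (k : ℕ → ℝ) (s : ℕ) {y : ℝ}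
    (hy : |y| ≤ t) :
    ‖mmF2 k s y‖ ≤ (4 / t ^ 2) * (((s : ℝ) ^ 2 + 1) * |k s| * (t ^ 2) ^ s) := by
  have h1 : ‖mmF2 k s y‖ =
      |k s| * ((2 * s : ℕ) : ℝ) * ((2 * s - 1 : ℕ) : ℝ) * |y| ^ (2 * s - 1 - 1) := by
    simp [mmF2, abs_mul, abs_pow]
  rw [h1]
  calc |k s| * ((2 * s : ℕ) : ℝ) * ((2 * s - 1 : ℕ) : ℝ) * |y| ^ (2 * s - 1 - 1)
      ≤ |k s| * ((2 * s : ℕ) : ℝ) * ((2 * s - 1 : ℕ) : ℝ) * t ^ (2 * s - 1 - 1) := by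
        apply mul_le_mul_of_nonneg_left (pow_le_pow_left₀ (abs_nonneg y) hy _)
        positivity
    _ ≤ |k s| * ((2 * s : ℕ) : ℝ) * ((2 * s - 1 : ℕ) : ℝ) * ((t ^ 2) ^ s / t ^ 2) := by
        apply mul_le_mul_of_nonneg_left (tpow2 ht0 ht1 s)
        positivity
    _ ≤ (4 / t ^ 2) * (((s : ℝ) ^ 2 + 1) * |k s| * (t ^ 2) ^ s) := by
        have hle : ((2 * s - 1 : ℕ) : ℝ) ≤ 2 * (s : ℝ) := by
          have h' : (2 * s - 1 : ℕ) ≤ 2 * s := by omega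
          calc ((2 * s - 1 : ℕ) : ℝ) ≤ ((2 * s : ℕ) : ℝ) := by exact_mod_cast h'
            _ = 2 * (s : ℝ) := by push_cast; ring
        have hc0 : (0:ℝ) ≤ ((2 * s - 1 : ℕ) : ℝ) := Nat.cast_nonneg _
        have h2s : ((2 * s : ℕ) : ℝ) = 2 * (s : ℝ) := by push_cast; ring
        have hKX : (0:ℝ) ≤ |k s| * (t ^ 2) ^ s :=
          mul_nonneg (abs_nonneg _) (pow_nonneg (sq_nonneg t) s)
        have h4 : 2 * (s:ℝ) * ((2 * s - 1 : ℕ) : ℝ) ≤ 4 * ((s:ℝ) ^ 2 + 1) := by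
          nlinarith [Nat.cast_nonneg (α := ℝ) s, sq_nonneg ((s:ℝ))]
        have key : |k s| * (2 * (s:ℝ)) * ((2 * s - 1 : ℕ) : ℝ) * (t ^ 2) ^ s ≤
            4 * (((s : ℝ) ^ 2 + 1) * |k s| * (t ^ 2) ^ s) := by
          nlinarith [mul_le_mul_of_nonneg_right h4 hKX, Nat.cast_nonneg (α := ℝ) s]
        calc |k s| * ((2 * s : ℕ) : ℝ) * ((2 * s - 1 : ℕ) : ℝ) * ((t ^ 2) ^ s / t ^ 2)
            = (|k s| * (2 * (s:ℝ)) * ((2 * s - 1 : ℕ) : ℝ) * (t ^ 2) ^ s) / t ^ 2 := by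
              rw [h2s]; ring
          _ ≤ (4 * (((s : ℝ) ^ 2 + 1) * |k s| * (t ^ 2) ^ s)) / t ^ 2 :=
              div_le_div_of_nonneg_right key (by positivity)
          _ = (4 / t ^ 2) * (((s : ℝ) ^ 2 + 1) * |k s| * (t ^ 2) ^ s) := by ring

variable {R h : ℝ} {k : ℕ → ℝ}

lemma mm_summables
    (hrec : ∀ s : ℕ, 1 ≤ s →
      k (s + 1) = ((4 * (s : ℝ) ^ 2 - (R - 2 * h ^ 2)) * k s - 4 * h ^ 2 * k (s - 1)) /
        ((2 * (s : ℝ) + 1) * (2 * (s : ℝ) + 2)))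
    {v : ℝ} (hv : |v| < 1) :
    Summable (fun s => mmF k s v) ∧ Summable (fun s => mmF1 k s v) ∧
      Summable (fun s => mmF2 k s v) := by
  set t : ℝ := (|v| + 1) / 2 with htdef
  have hv0 : 0 ≤ |v| := abs_nonneg v
  have ht0 : 0 < t := by rw [htdef]; linarith
  have ht1 : t < 1 := by rw [htdef]; linarith
  have htv : |v| ≤ t := by rw [htdef]; linarith
  have M : Summable (fun s : ℕ => ((s : ℝ) ^ 2 + 1) * |k s| * (t ^ 2) ^ s) :=
    mm_master (R := R) (h := h) hrec (by positivity) (by nlinarith)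
  refine ⟨?_, ?_, ?_⟩
  · exact Summable.of_norm_bounded M (fun s => mm_bound0 ht0 k s htv)
  · exact Summable.of_norm_bounded (M.mul_left (2 / t))
      (fun s => mm_bound1 ht0 (le_of_lt ht1) k s htv)
  · exact Summable.of_norm_bounded (M.mul_left (4 / t ^ 2))
      (fun s => mm_bound2 ht0 (le_of_lt ht1) k s htv)

lemma mm_hasDerivAt
    (hrec : ∀ s : ℕ, 1 ≤ s →
      k (s + 1) = ((4 * (s : ℝ) ^ 2 - (R - 2 * h ^ 2)) * k s - 4 * h ^ 2 * k (s - 1)) /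
        ((2 * (s : ℝ) + 1) * (2 * (s : ℝ) + 2)))
    {v : ℝ} (hv : |v| < 1) :
    HasDerivAt (fun z => ∑' s, mmF k s z) (∑' s, mmF1 k s v) v ∧
      HasDerivAt (fun z => ∑' s, mmF1 k s z) (∑' s, mmF2 k s v) v := by
  set t : ℝ := (|v| + 1) / 2 with htdef
  have hv0 : 0 ≤ |v| := abs_nonneg v
  have ht0 : 0 < t := by rw [htdef]; linarith
  have ht1 : t < 1 := by rw [htdef]; linarith
  have htv : |v| < t := by rw [htdef]; linarith
  have M : Summable (fun s : ℕ => ((s : ℝ) ^ 2 + 1) * |k s| * (t ^ 2) ^ s) :=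
    mm_master (R := R) (h := h) hrec (by positivity) (by nlinarith)
  have hball : ∀ y : ℝ, y ∈ Metric.ball (0:ℝ) t → |y| ≤ t := by
    intro y hy
    have := Metric.mem_ball.mp hy
    rw [Real.dist_eq, sub_zero] at this
    exact le_of_lt this
  have h0mem : (0:ℝ) ∈ Metric.ball (0:ℝ) t := Metric.mem_ball_self ht0
  have hvmem : v ∈ Metric.ball (0:ℝ) t := by
    rw [Metric.mem_ball, Real.dist_eq, sub_zero]; exact htv
  constructor
  · refine hasDerivAt_tsum_of_isPreconnected (M.mul_left (2 / t)) Metric.isOpen_ball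
      ((convex_ball (0:ℝ) t).isPreconnected) (fun s y _ => hasDerivAt_mmF k s y)
      (fun s y hy => mm_bound1 ht0 (le_of_lt ht1) k s (hball y hy)) h0mem ?_ hvmem
    refine summable_of_ne_finset_zero (s := {0}) ?_
    intro b hb
    have hb' : 2 * b ≠ 0 := by simp at hb; omega
    simp [mmF, zero_pow hb']
  · refine hasDerivAt_tsum_of_isPreconnected (M.mul_left (4 / t ^ 2)) Metric.isOpen_ball
      ((convex_ball (0:ℝ) t).isPreconnected) (fun s y _ => hasDerivAt_mmF1 k s y)
      (fun s y hy => mm_bound2 ht0 (le_of_lt ht1) k s (hball y hy)) h0mem ?_ hvmem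
    have hfun0 : (fun s => mmF1 k s (0:ℝ)) = fun _ => (0:ℝ) := by
      funext s
      cases s with
      | zero => simp [mmF1]
      | succ n =>
          have hb' : 2 * (n + 1) - 1 ≠ 0 := by omega
          simp [mmF1, zero_pow hb']
    rw [hfun0]
    exact summable_zero

end MathieuAux

open MathieuAux in
/-- series solution of the modified Mathieu equation in powers of
the semi-minor axis. -/
theorem modified_mathieu_series_solution
    (R h : ℝ) (k : ℕ → ℝ)
    (hk1 : k 1 = -(R - 2 * h ^ 2) * k 0 / 2)
    (hrec : ∀ s : ℕ, 1 ≤ s →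
      k (s + 1) = ((4 * (s : ℝ) ^ 2 - (R - 2 * h ^ 2)) * k s - 4 * h ^ 2 * k (s - 1)) /
        ((2 * (s : ℝ) + 1) * (2 * (s : ℝ) + 2))) :
    (∀ u : ℝ, |u| < 1 → Summable (fun s : ℕ => (-1 : ℝ) ^ s * k s * u ^ (2 * s))) ∧
    ∀ u ∈ Set.Ioo (-1 : ℝ) 1,
      (1 + u ^ 2) * deriv (deriv (modifiedMathieuSeries k)) u +
        u * deriv (modifiedMathieuSeries k) u +
        (4 * h ^ 2 * u ^ 2 - R + 2 * h ^ 2) * modifiedMathieuSeries k u = 0 := by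
  constructor
  · intro u hu
    exact (mm_summables hrec hu).1
  · intro u hu
    have hu1 : |u| < 1 := abs_lt.mpr ⟨hu.1, hu.2⟩
    obtain ⟨S0, S1, S2⟩ := mm_summables hrec hu1
    have hgfun : modifiedMathieuSeries k = fun z => ∑' s, mmF k s z := rfl
    have hderiv1 : ∀ v : ℝ, |v| < 1 →
        deriv (modifiedMathieuSeries k) v = ∑' s, mmF1 k s v := by
      intro v hv
      rw [hgfun]
      exact ((mm_hasDerivAt hrec hv).1).deriv
    have heq : deriv (modifiedMathieuSeries k) =ᶠ[nhds u] fun z => ∑' s, mmF1 k s z := by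
      filter_upwards [isOpen_Ioo.eventually_mem hu] with v hv
      exact hderiv1 v (abs_lt.mpr ⟨hv.1, hv.2⟩)
    have hderiv2 : deriv (deriv (modifiedMathieuSeries k)) u = ∑' s, mmF2 k s u := by
      rw [heq.deriv_eq]
      exact ((mm_hasDerivAt hrec hu1).2).deriv
    have HG : HasSum (fun s => mmF k s u) (modifiedMathieuSeries k u) := S0.hasSum
    have HG1 : HasSum (fun s => mmF1 k s u) (deriv (modifiedMathieuSeries k) u) := by
      rw [hderiv1 u hu1]; exact S1.hasSum
    have HG2 : HasSum (fun s => mmF2 k s u)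
        (deriv (deriv (modifiedMathieuSeries k)) u) := by
      rw [hderiv2]; exact S2.hasSum
    have H : HasSum
        (fun s => (1 + u ^ 2) * mmF2 k s u + u * mmF1 k s u +
          (4 * h ^ 2 * u ^ 2 - R + 2 * h ^ 2) * mmF k s u)
        ((1 + u ^ 2) * deriv (deriv (modifiedMathieuSeries k)) u +
          u * deriv (modifiedMathieuSeries k) u +
          (4 * h ^ 2 * u ^ 2 - R + 2 * h ^ 2) * modifiedMathieuSeries k u) :=
      ((HG2.mul_left _).add (HG1.mul_left _)).add (HG.mul_left _)
    set P : ℕ → ℝ := fun s => mmF2 k s u with hPdef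
    set Q : ℕ → ℝ := fun s =>
      (-1) ^ s * k s * (4 * (s:ℝ) ^ 2 - (R - 2 * h ^ 2)) * u ^ (2 * s) with hQdef
    set Rr : ℕ → ℝ := fun s => 4 * h ^ 2 * ((-1) ^ s * k s) * u ^ (2 * s + 2) with hRdef
    have hw : ∀ s : ℕ, (1 + u ^ 2) * mmF2 k s u + u * mmF1 k s u +
        (4 * h ^ 2 * u ^ 2 - R + 2 * h ^ 2) * mmF k s u = P s + Q s + Rr s := by
      intro s
      cases s with
      | zero =>
          simp only [hPdef, hQdef, hRdef, mmF, mmF1, mmF2]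
          norm_num
          ring
      | succ n =>
          have e1 : 2 * (n + 1) - 1 = 2 * n + 1 := by omega
          have e2 : 2 * n + 1 - 1 = 2 * n := by omega
          simp only [hPdef, hQdef, hRdef, mmF, mmF1, mmF2, e1, e2]
          push_cast
          ring
    have SR : Summable Rr := by
      have hRr : Rr = fun s => (4 * h ^ 2 * u ^ 2) * mmF k s u := by
        funext s
        simp only [hRdef, mmF]
        ring
      rw [hRr]
      exact S0.mul_left _
    have SQ : Summable Q := by
      have hQe : Q = fun s => ((1 + u ^ 2) * mmF2 k s u + u * mmF1 k s u +
          (4 * h ^ 2 * u ^ 2 - R + 2 * h ^ 2) * mmF k s u) - P s - Rr s := by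
        funext s
        rw [hw s]; ring
      rw [hQe]
      exact (H.summable.sub S2).sub SR
    have hTsum : (1 + u ^ 2) * deriv (deriv (modifiedMathieuSeries k)) u +
        u * deriv (modifiedMathieuSeries k) u +
        (4 * h ^ 2 * u ^ 2 - R + 2 * h ^ 2) * modifiedMathieuSeries k u =
        ∑' s, (P s + Q s + Rr s) := by
      rw [← H.tsum_eq]
      exact tsum_congr hw
    have hsplit : ∑' s, (P s + Q s + Rr s) =
        (∑' s, P s) + (∑' s, Q s) + (∑' s, Rr s) := by
      rw [Summable.tsum_add (S2.add SQ) SR, Summable.tsum_add S2 SQ]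
    have HP : HasSum P (∑' s, P s) := S2.hasSum
    have hP0 : P 0 = 0 := by simp [hPdef, mmF2]
    have HP' : HasSum (fun n => P (n + 1)) (∑' s, P s) := by
      refine (hasSum_nat_add_iff 1).mpr ?_
      simpa [hP0] using HP
    set Rr' : ℕ → ℝ := fun s => if s = 0 then 0 else Rr (s - 1) with hR'def
    have hRrshift : (fun n => Rr' (n + 1)) = Rr := by
      funext n; simp [hR'def]
    have HR' : HasSum Rr' (∑' s, Rr s) := by
      have h1 : HasSum (fun n => Rr' (n + 1)) (∑' s, Rr s) := by
        rw [hRrshift]; exact SR.hasSum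
      have h2 := (hasSum_nat_add_iff 1).mp h1
      simpa [hR'def] using h2
    have Hcomb : HasSum (fun s => P (s + 1) + Q s + Rr' s)
        ((∑' s, P s) + (∑' s, Q s) + (∑' s, Rr s)) :=
      (HP'.add SQ.hasSum).add HR'
    have hzero : ∀ s : ℕ, P (s + 1) + Q s + Rr' s = 0 := by
      intro s
      cases s with
      | zero =>
          simp only [hPdef, hQdef, hR'def, mmF2, if_pos rfl]
          norm_num
          rw [hk1]
          ring
      | succ n =>
          have hrec2 := hrec (n + 1) (by omega)
          push_cast at hrec2
          have hden : ((2 * ((n:ℝ) + 1) + 1) * (2 * ((n:ℝ) + 1) + 2)) ≠ 0 := by positivity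
          have hk2 : (2 * ((n:ℝ) + 1) + 1) * (2 * ((n:ℝ) + 1) + 2) * k (n + 1 + 1) =
              (4 * ((n:ℝ) + 1) ^ 2 - (R - 2 * h ^ 2)) * k (n + 1) - 4 * h ^ 2 * k n := by
            rw [hrec2]; field_simp
          have e1 : 2 * (n + 1 + 1) - 1 = 2 * n + 3 := by omega
          have e2 : 2 * n + 3 - 1 = 2 * n + 2 := by omega
          have e3 : n + 1 - 1 = n := by omega
          simp only [hPdef, hQdef, hR'def, mmF2, e1, e2, e3,
            if_neg (Nat.succ_ne_zero n)]
          push_cast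
          linear_combination ((-1:ℝ) ^ n * u ^ (2 * n + 2)) * hk2
    have hzero' : ((∑' s, P s) + (∑' s, Q s) + (∑' s, Rr s)) = 0 := by
      refine Hcomb.unique ?_
      rw [funext hzero]
      exact hasSum_zero
    rw [hTsum, hsplit, hzero']
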